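/- For every positive integer k ≥ 2, the graph QI(k²,k) is (k!)^{k−1}-regular: each uniform k-partition of a k²-set is qualitatively independent with exactly (k!)^{k−1} uniform k-partitions. -/

import Mathlib

open Finset

namespace QIAux

lemma all_one {β : Type*} {s : Finset β} {f : β → ℕ}
    (h1 : ∀ a ∈ s, 1 ≤ f a) (h2 : ∑ a ∈ s, f a = s.card) :
    ∀ a ∈ s, f a = 1 := by
  classical
  by_contra h
  push_neg at h
  obtain ⟨a, ha, hfa⟩ := h
  have h2a : 2 ≤ f a := by have := h1 a ha; omega
  have hle : (s.erase a).card ≤ ∑ b ∈ s.erase a, f b := by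
    calc (s.erase a).card = ∑ _b ∈ s.erase a, 1 := by simp
    _ ≤ ∑ b ∈ s.erase a, f b :=
      Finset.sum_le_sum fun b hb => h1 b (Finset.mem_of_mem_erase hb)
  have hsplit : f a + ∑ b ∈ s.erase a, f b = ∑ b ∈ s, f b := Finset.add_sum_erase _ _ ha
  have hcard : (s.erase a).card = s.card - 1 := Finset.card_erase_of_mem ha
  have hpos : 1 ≤ s.card := Finset.card_pos.mpr ⟨a, ha⟩
  omega

variable {α : Type*} [Fintype α] [DecidableEq α]

lemma card_eq_sum_inter (P : Finpartition (univ : Finset α)) (B : Finset α) :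
    ∑ A ∈ P.parts, (A ∩ B).card = B.card := by
  rw [← Finset.card_biUnion]
  · congr 1
    ext x
    simp only [Finset.mem_biUnion, Finset.mem_inter]
    constructor
    · rintro ⟨A, _, _, hx⟩; exact hx
    · intro hx
      obtain ⟨A, hA, hxA⟩ := P.exists_mem (Finset.mem_univ x)
      exact ⟨A, hA, hxA, hx⟩
  · intro x hx y hy hxy
    exact (P.disjoint hx hy hxy).mono Finset.inter_subset_left Finset.inter_subset_left

lemma inter_card_one {k : ℕ} (P Q : Finpartition (univ : Finset α))
    (hPc : P.parts.card = k) (hQ : ∀ B ∈ Q.parts, B.card = k)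
    (hind : ∀ A ∈ P.parts, ∀ B ∈ Q.parts, (A ∩ B).Nonempty) :
    ∀ A ∈ P.parts, ∀ B ∈ Q.parts, (A ∩ B).card = 1 := by
  intro A hA B hB
  refine all_one (f := fun A => (A ∩ B).card) (s := P.parts) ?_ ?_ A hA
  · intro A' hA'; exact Finset.card_pos.mpr (hind A' hA' B hB)
  · rw [card_eq_sum_inter, hQ B hB, hPc]

def TSet (P : Finpartition (univ : Finset α)) (A₀ : Finset α) : Type _ :=
  { f : α → α // (∀ a ∈ A₀, f a = a) ∧
      ∀ A ∈ P.parts, Set.MapsTo f A A₀ ∧ Set.InjOn f A }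

lemma card_QI_eq_card_T {k : ℕ} (P : Finpartition (univ : Finset α))
    (hP : ∀ A ∈ P.parts, A.card = k) (hPc : P.parts.card = k)
    (A₀ : Finset α) (hA₀ : A₀ ∈ P.parts) :
    Nat.card {Q : Finpartition (univ : Finset α) //
        (∀ B ∈ Q.parts, B.card = k) ∧
        ∀ A ∈ P.parts, ∀ B ∈ Q.parts, (A ∩ B).Nonempty} = Nat.card (TSet P A₀) := by
  classical
  set QT := {Q : Finpartition (univ : Finset α) //
      (∀ B ∈ Q.parts, B.card = k) ∧
      ∀ A ∈ P.parts, ∀ B ∈ Q.parts, (A ∩ B).Nonempty} with hQT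
  have huniq : ∀ s : Finset α, s.card = 1 → ∀ a ∈ s, ∀ b ∈ s, a = b :=
    fun s hs => Finset.card_le_one.mp hs.le
  have hone : ∀ (Qe : QT), ∀ A ∈ P.parts, ∀ B ∈ Qe.1.parts, (A ∩ B).card = 1 :=
    fun Qe => inter_card_one P Qe.1 hPc Qe.2.1 Qe.2.2
  have hmem : ∀ (Qe : QT) (x : α), (A₀ ∩ Qe.1.part x).Nonempty :=
    fun Qe x => Qe.2.2 A₀ hA₀ _ (Qe.1.part_mem.mpr (Finset.mem_univ x))
  -- the canonical function associated with Qe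
  set Φ : QT → α → α := fun Qe x => (hmem Qe x).choose with hΦ
  have hΦspec : ∀ Qe x, Φ Qe x ∈ A₀ ∧ Φ Qe x ∈ Qe.1.part x :=
    fun Qe x => Finset.mem_inter.mp (hmem Qe x).choose_spec
  have hΦuniq : ∀ Qe x, ∀ y ∈ A₀, y ∈ Qe.1.part x → y = Φ Qe x := by
    intro Qe x y hy hy'
    exact huniq _ (hone Qe A₀ hA₀ _ (Qe.1.part_mem.mpr (Finset.mem_univ x))) y
      (Finset.mem_inter.mpr ⟨hy, hy'⟩) _ (hmem Qe x).choose_spec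
  -- membership in a part is detected by Φ
  have hdetect : ∀ Qe (x y : α), y ∈ Qe.1.part x ↔ Φ Qe y = Φ Qe x := by
    intro Qe x y
    constructor
    · intro hy
      have hpp : Qe.1.part y = Qe.1.part x :=
        (Qe.1.mem_part_iff_part_eq_part (Finset.mem_univ y) (Finset.mem_univ x)).mp hy
      exact hΦuniq Qe x (Φ Qe y) (hΦspec Qe y).1 (hpp ▸ (hΦspec Qe y).2)
    · intro h
      have h1 : Φ Qe x ∈ Qe.1.part y := h ▸ (hΦspec Qe y).2
      have hpp : Qe.1.part y = Qe.1.part x :=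
        Qe.1.eq_of_mem_parts (Qe.1.part_mem.mpr (Finset.mem_univ y))
          (Qe.1.part_mem.mpr (Finset.mem_univ x)) h1 (hΦspec Qe x).2
      exact hpp ▸ Qe.1.mem_part (Finset.mem_univ y)
  have hΦT : ∀ Qe, (∀ a ∈ A₀, Φ Qe a = a) ∧
      ∀ A ∈ P.parts, Set.MapsTo (Φ Qe) A A₀ ∧ Set.InjOn (Φ Qe) A := by
    intro Qe
    constructor
    · intro a ha
      exact (hΦuniq Qe a a ha (Qe.1.mem_part (Finset.mem_univ a))).symm
    · intro A hA
      constructor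
      · intro x _; exact (hΦspec Qe x).1
      · intro x hx y hy hxy
        have h1 : y ∈ Qe.1.part x := (hdetect Qe x y).mpr hxy.symm
        have hcard := hone Qe A hA _ (Qe.1.part_mem.mpr (Finset.mem_univ x))
        exact huniq _ hcard x
          (Finset.mem_inter.mpr ⟨hx, Qe.1.mem_part (Finset.mem_univ x)⟩) y
          (Finset.mem_inter.mpr ⟨hy, h1⟩)
  apply Nat.card_eq_of_bijective (fun Qe => (⟨Φ Qe, hΦT Qe⟩ : TSet P A₀))
  constructor
  · -- injective
    intro Qe Qe' h
    have hfun : Φ Qe = Φ Qe' := congrArg Subtype.val h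
    have hsub : ∀ (Q1 Q2 : QT), Φ Q1 = Φ Q2 → ∀ B ∈ Q1.1.parts, B ∈ Q2.1.parts := by
      intro Q1 Q2 hf B hB
      obtain ⟨x, hx⟩ := Q1.1.nonempty_of_mem_parts hB
      have hBx : Q1.1.part x = B := Q1.1.part_eq_of_mem hB hx
      have : B = Q2.1.part x := by
        ext y
        rw [← hBx, hdetect Q1 x y, hdetect Q2 x y, hf]
      exact this ▸ Q2.1.part_mem.mpr (Finset.mem_univ x)
    apply Subtype.ext
    apply Finpartition.ext
    ext B
    exact ⟨fun hB => hsub Qe Qe' hfun B hB, fun hB => hsub Qe' Qe hfun.symm B hB⟩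
  · -- surjective
    rintro ⟨f, hfix, hf⟩
    have hfA₀ : ∀ x : α, f x ∈ A₀ := by
      intro x
      obtain ⟨A, hA, hxA⟩ := P.exists_mem (Finset.mem_univ x)
      exact (hf A hA).1 hxA
    set s : Setoid α := ⟨fun a b => f a = f b,
      ⟨fun _ => rfl, fun h => h.symm, fun h1 h2 => h1.trans h2⟩⟩ with hs
    letI : DecidableRel s.r := fun a b => show Decidable (f a = f b) from inferInstance
    set Q : Finpartition (univ : Finset α) := Finpartition.ofSetoid s with hQdef
    have hQpart : ∀ a b : α, b ∈ Q.part a ↔ f a = f b := fun a b =>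
      Finpartition.mem_part_ofSetoid_iff_rel
    -- every part of Q meets every part of P in exactly one point
    have hinter : ∀ A ∈ P.parts, ∀ B ∈ Q.parts, (A ∩ B).card = 1 := by
      intro A hA B hB
      obtain ⟨x, hx⟩ := Q.nonempty_of_mem_parts hB
      have hBx : Q.part x = B := Q.part_eq_of_mem hB hx
      have hsurj : ∃ a, ∃ _ : a ∈ A, f x = f a := by
        refine Finset.surj_on_of_inj_on_of_card_le (fun a _ => f a)
          (fun a ha => (hf A hA).1 ha)
          (fun a₁ a₂ ha₁ ha₂ hh => (hf A hA).2 ha₁ ha₂ hh) ?_ (f x) (hfA₀ x)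
        rw [hP A hA, hP A₀ hA₀]
      obtain ⟨a, haA, hfa⟩ := hsurj
      rw [Finset.card_eq_one]
      refine ⟨a, ?_⟩
      ext y
      simp only [Finset.mem_inter, Finset.mem_singleton]
      constructor
      · rintro ⟨hyA, hyB⟩
        have : f x = f y := (hQpart x y).mp (hBx ▸ hyB)
        exact (hf A hA).2 hyA haA (this ▸ hfa)
      · intro h
        rw [h]
        exact ⟨haA, hBx ▸ (hQpart x a).mpr hfa⟩
    have hQuni : ∀ B ∈ Q.parts, B.card = k := by
      intro B hB
      have := card_eq_sum_inter P B
      rw [Finset.sum_congr rfl (fun A hA => hinter A hA B hB)] at this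
      simp only [Finset.sum_const, smul_eq_mul, mul_one] at this
      rw [← this, hPc]
    have hQind : ∀ A ∈ P.parts, ∀ B ∈ Q.parts, (A ∩ B).Nonempty := by
      intro A hA B hB
      rw [← Finset.card_pos, hinter A hA B hB]
      norm_num
    refine ⟨⟨Q, hQuni, hQind⟩, ?_⟩
    apply Subtype.ext
    funext x
    show Φ ⟨Q, hQuni, hQind⟩ x = f x
    refine (hΦuniq ⟨Q, hQuni, hQind⟩ x (f x) (hfA₀ x) ?_).symm
    exact (hQpart x (f x)).mpr (hfix (f x) (hfA₀ x)).symm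

lemma card_T {k : ℕ} (P : Finpartition (univ : Finset α))
    (hP : ∀ A ∈ P.parts, A.card = k)
    (A₀ : Finset α) (hA₀ : A₀ ∈ P.parts) :
    Nat.card (TSet P A₀) = (Nat.factorial k) ^ (P.parts.card - 1) := by
  classical
  have hdisj : ∀ A ∈ P.parts.erase A₀, ∀ x ∈ A, x ∉ A₀ := by
    intro A hAe x hxA hx
    exact (Finset.mem_erase.mp hAe).1 (P.eq_of_mem_parts (Finset.mem_of_mem_erase hAe) hA₀ hxA hx)
  have main : Nat.card (TSet P A₀) =
      Nat.card (∀ A : {A // A ∈ P.parts.erase A₀}, ({x : α // x ∈ A.1} ↪ {x : α // x ∈ A₀})) := by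
    apply Nat.card_eq_of_bijective (fun f A =>
      ⟨fun x => ⟨f.1 x.1, (f.2.2 A.1 (Finset.mem_of_mem_erase A.2)).1 x.2⟩,
        fun x y hxy => Subtype.ext
          ((f.2.2 A.1 (Finset.mem_of_mem_erase A.2)).2 x.2 y.2 (congrArg Subtype.val hxy))⟩)
    constructor
    · intro f g h
      apply Subtype.ext; funext x
      by_cases hx : x ∈ A₀
      · rw [f.2.1 x hx, g.2.1 x hx]
      · obtain ⟨A, hA, hxA⟩ := P.exists_mem (Finset.mem_univ x)
        have hAe : A ∈ P.parts.erase A₀ :=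
          Finset.mem_erase.mpr ⟨fun he => hx (he ▸ hxA), hA⟩
        exact congrArg (fun e => ((e ⟨x, hxA⟩ : {y // y ∈ A₀}) : α)) (congrFun h ⟨A, hAe⟩)
    · intro g
      have hidx : ∀ (x : α), x ∉ A₀ → P.part x ∈ P.parts.erase A₀ := fun x hx =>
        Finset.mem_erase.mpr ⟨fun he => hx (he ▸ P.mem_part (Finset.mem_univ x)),
          P.part_mem.mpr (Finset.mem_univ x)⟩
      set F : α → α := fun x => if hx : x ∈ A₀ then x else
        (g ⟨P.part x, hidx x hx⟩ ⟨x, P.mem_part (Finset.mem_univ x)⟩).1 with hF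
      have hkey : ∀ (A : {A // A ∈ P.parts.erase A₀}) (x : α) (hxA : x ∈ A.1),
          F x = (g A ⟨x, hxA⟩).1 := by
        intro A x hxA
        have hx : x ∉ A₀ := hdisj A.1 A.2 x hxA
        have hpart : P.part x = A.1 := P.part_eq_of_mem (Finset.mem_of_mem_erase A.2) hxA
        obtain ⟨A, hA⟩ := A
        simp only at hpart hxA ⊢
        rw [hF]
        simp only [dif_neg hx]
        subst hpart
        rfl
      have hmem : ∀ (A : {A // A ∈ P.parts.erase A₀}) (x : α) (hxA : x ∈ A.1), F x ∈ A₀ := by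
        intro A x hxA
        rw [hkey A x hxA]
        exact (g A ⟨x, hxA⟩).2
      have hfix : ∀ a ∈ A₀, F a = a := fun a ha => dif_pos ha
      refine ⟨⟨F, hfix, ?_⟩, ?_⟩
      · intro A hA
        by_cases hAA : A = A₀
        · subst hAA
          constructor
          · intro x hx
            simpa [hfix x hx] using hx
          · intro x hx y hy hxy
            rwa [hfix x hx, hfix y hy] at hxy
        · have hAe : A ∈ P.parts.erase A₀ := Finset.mem_erase.mpr ⟨hAA, hA⟩
          constructor
          · intro x hx
            exact hmem ⟨A, hAe⟩ x hx
          · intro x hx y hy hxy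
            rw [hkey ⟨A, hAe⟩ x hx, hkey ⟨A, hAe⟩ y hy] at hxy
            have := (g ⟨A, hAe⟩).injective (Subtype.ext hxy)
            exact congrArg Subtype.val this
      · funext A
        apply DFunLike.ext
        intro x
        apply Subtype.ext
        show F x.1 = (g A x).1
        rw [hkey A x.1 x.2]
  rw [main, Nat.card_pi]
  have hc : ∀ A : {A // A ∈ P.parts.erase A₀},
      Nat.card ({x : α // x ∈ A.1} ↪ {x : α // x ∈ A₀}) = Nat.factorial k := by
    intro A
    rw [Nat.card_eq_fintype_card, Fintype.card_embedding_eq, Fintype.card_coe,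
      Fintype.card_coe, hP A.1 (Finset.mem_of_mem_erase A.2), hP A₀ hA₀,
      Nat.descFactorial_self]
  rw [Finset.prod_congr rfl (fun A _ => hc A), Finset.prod_const, Finset.card_univ,
    Fintype.card_coe, Finset.card_erase_of_mem hA₀]

end QIAux


open QIAux in
/-- For `k ≥ 2`, the graph `QI(k²,k)` is `(k!)^(k−1)`-regular: each uniform
`k`-partition of a `k²`-set is qualitatively independent with exactly
`(k!)^(k−1)` uniform `k`-partitions. -/
theorem QIGraph_regular (k : ℕ) (hk : 2 ≤ k)
    (P : Finpartition (Finset.univ : Finset (Fin (k ^ 2))))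
    (hP : ∀ A ∈ P.parts, A.card = k) :
    Nat.card {Q : Finpartition (Finset.univ : Finset (Fin (k ^ 2))) //
        (∀ B ∈ Q.parts, B.card = k) ∧
        ∀ A ∈ P.parts, ∀ B ∈ Q.parts, (A ∩ B).Nonempty} =
      (Nat.factorial k) ^ (k - 1) := by
  classical
  have hk0 : 0 < k := by omega
  haveI : Nonempty (Fin (k ^ 2)) := ⟨⟨0, by positivity⟩⟩
  have hne : (Finset.univ : Finset (Fin (k ^ 2))) ≠ ⊥ := by
    simpa using (Finset.univ_nonempty (α := Fin (k ^ 2))).ne_empty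
  obtain ⟨A₀, hA₀⟩ := P.parts_nonempty hne
  have hPc : P.parts.card = k := by
    have hsum := P.sum_card_parts
    have h1 : P.parts.card * k = k ^ 2 := by
      rw [← Finset.sum_const_nat (m := k) (fun A hA => hP A hA), hsum,
        Finset.card_univ, Fintype.card_fin]
    have h2 : k ^ 2 = k * k := sq k
    exact Nat.eq_of_mul_eq_mul_right hk0 (h1.trans h2)
  rw [QIAux.card_QI_eq_card_T P hP hPc A₀ hA₀, QIAux.card_T P hP A₀ hA₀, hPc]
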